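/- Let G be a finite O-connected digraph and F a subset of the vertices of G. If for some vertex v there are n distinct F-spanning trees of G with origin v, then there are at least n distinct directed spanning subtrees of G with origin v. In particular, if v lies in F, then the number of directed spanning subtrees of G with origin v is at least the number of directed spanning subtrees of the induced subgraph G[F] with origin v. -/

import Mathlib

/-- A digraph: a (multi)graph in which multiple edges and loops are allowed,
together with an orientation.  An edge `e` runs from `src e` to `tgt e`. -/
structure MultiDigraph (V E : Type) where
  src : E → V
  tgt : E → V

namespace MultiDigraph

variable {V E : Type}

/-- One step from `a` to `b` along an edge belonging to `T`. -/
def step (G : MultiDigraph V E) (T : Set E) (a b : V) : Prop :=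
  ∃ e ∈ T, G.src e = a ∧ G.tgt e = b

/-- Reachability by a directed path using only edges of `T`. -/
def reach (G : MultiDigraph V E) (T : Set E) : V → V → Prop :=
  Relation.ReflTransGen (G.step T)

/-- `G` is `O`-connected: any vertex can be reached from any other by a
directed path. -/
def OConnected (G : MultiDigraph V E) : Prop :=
  ∀ u v : V, G.reach Set.univ u v

/-- The edge set `T` is a directed tree in `G` with origin `u` and vertex set
`W`: all edges of `T` join vertices of `W`, no edge of `T` ends at the origin
`u`, every other vertex of `W` is the terminal vertex of exactly one edge of
`T`, and every vertex of `W` is reachable from `u` through `T` (which forces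
connectedness and the absence of cycles). -/
def IsDirTree (G : MultiDigraph V E) (u : V) (W : Set V) (T : Set E) : Prop :=
  u ∈ W ∧
  (∀ e ∈ T, G.src e ∈ W ∧ G.tgt e ∈ W) ∧
  (∀ e ∈ T, G.tgt e ≠ u) ∧
  (∀ w ∈ W, w ≠ u → ∃! e, e ∈ T ∧ G.tgt e = w) ∧
  (∀ w ∈ W, G.reach T u w)

/-- A directed spanning subtree of `G` with origin `u` is a directed tree
whose vertex set is all of `V`. -/
def IsSpanTree (G : MultiDigraph V E) (u : V) (T : Set E) : Prop :=
  G.IsDirTree u Set.univ T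

end MultiDigraph

namespace MultiDigraph

variable {V E : Type}

/-- The number of directed spanning subtrees of `G` with origin `u`. -/
noncomputable def treeCount (G : MultiDigraph V E) (u : V) : ℕ :=
  Set.ncard {T : Set E | G.IsSpanTree u T}

/-- An `F`-spanning tree of `G` with origin `u`: a directed tree whose vertex
set contains `F` and all of whose leaves (vertices of the tree that are the
initial vertex of no tree edge) lie in `F`. -/
def IsFSpanTree (G : MultiDigraph V E) (u : V) (F : Set V)
    (W : Set V) (T : Set E) : Prop :=
  G.IsDirTree u W T ∧ F ⊆ W ∧
  ∀ w ∈ W, (∀ e ∈ T, G.src e ≠ w) → w ∈ F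

/-- The subgraph of `G` induced by a set `F` of vertices. -/
def induce (G : MultiDigraph V E) (F : Set V) :
    MultiDigraph F {e : E // G.src e ∈ F ∧ G.tgt e ∈ F} :=
  ⟨fun e => ⟨G.src e.1, e.2.1⟩, fun e => ⟨G.tgt e.1, e.2.2⟩⟩

end MultiDigraph

namespace MultiDigraph

variable {V E : Type}

lemma step_mono' (G : MultiDigraph V E) {T T' : Set E} (h : T ⊆ T') {a b : V}
    (hs : G.step T a b) : G.step T' a b := by
  obtain ⟨e, he, h1, h2⟩ := hs
  exact ⟨e, h he, h1, h2⟩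

lemma reach_mono' (G : MultiDigraph V E) {T T' : Set E} (h : T ⊆ T') {a b : V}
    (hr : G.reach T a b) : G.reach T' a b :=
  Relation.ReflTransGen.mono (fun _ _ hs => G.step_mono' h hs) _ _ hr

lemma exists_boundary (G : MultiDigraph V E) {W : Set V} {a b : V}
    (hr : G.reach Set.univ a b) (ha : a ∈ W) (hb : b ∉ W) :
    ∃ e : E, G.src e ∈ W ∧ G.tgt e ∉ W := by
  induction hr with
  | refl => exact absurd ha hb
  | @tail c d hac hstep ih =>
    by_cases hc : c ∈ W
    · obtain ⟨e, _, h1, h2⟩ := hstep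
      exact ⟨e, h1 ▸ hc, h2 ▸ hb⟩
    · exact ih hc

lemma exists_spanExtension [Finite V] (G : MultiDigraph V E) (hconn : G.OConnected)
    {v : V} :
    ∀ (n : ℕ) (W : Set V) (T : Set E), Wᶜ.ncard ≤ n → G.IsDirTree v W T →
      ∃ S, G.IsSpanTree v S ∧ T ⊆ S ∧ ∀ e ∈ S, e ∉ T → G.tgt e ∉ W := by
  intro n
  induction n with
  | zero =>
    intro W T hcard hT
    have hWc : Wᶜ = ∅ := (Set.ncard_eq_zero (Set.toFinite _)).mp (Nat.le_zero.mp hcard)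
    have hW : W = Set.univ := by simpa [Set.compl_empty_iff] using hWc
    subst hW
    exact ⟨T, hT, subset_rfl, fun e he hnot => absurd he hnot⟩
  | succ n ih =>
    intro W T hcard hT
    by_cases hW : W = Set.univ
    · subst hW; exact ⟨T, hT, subset_rfl, fun e he hnot => absurd he hnot⟩
    · obtain ⟨x, hx⟩ : ∃ x, x ∉ W := by
        by_contra h; push_neg at h; exact hW (Set.eq_univ_of_forall h)
      obtain ⟨e, hesrc, hetgt⟩ := G.exists_boundary (hconn v x) hT.1 hx
      obtain ⟨hv, hedges, hnotv, huniq, hreach⟩ := hT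
      have hT' : G.IsDirTree v (insert (G.tgt e) W) (insert e T) := by
        refine ⟨Set.mem_insert_of_mem _ hv, ?_, ?_, ?_, ?_⟩
        · intro e' he'
          rcases Set.mem_insert_iff.mp he' with rfl | he'
          · exact ⟨Set.mem_insert_of_mem _ hesrc, Set.mem_insert _ _⟩
          · exact ⟨Set.mem_insert_of_mem _ (hedges e' he').1,
              Set.mem_insert_of_mem _ (hedges e' he').2⟩
        · intro e' he'
          rcases Set.mem_insert_iff.mp he' with rfl | he'
          · exact fun h => hetgt (h ▸ hv)
          · exact hnotv e' he'
        · intro w hw hwv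
          rcases Set.mem_insert_iff.mp hw with rfl | hwW
          · refine ⟨e, ⟨Set.mem_insert _ _, rfl⟩, ?_⟩
            rintro e' ⟨he', htg⟩
            rcases Set.mem_insert_iff.mp he' with rfl | he'
            · rfl
            · exact absurd (htg ▸ (hedges e' he').2) hetgt
          · obtain ⟨e₀, ⟨he₀, htg₀⟩, hu⟩ := huniq w hwW hwv
            refine ⟨e₀, ⟨Set.mem_insert_of_mem _ he₀, htg₀⟩, ?_⟩
            rintro e' ⟨he', htg⟩
            rcases Set.mem_insert_iff.mp he' with rfl | he'
            · subst htg; exact absurd hwW hetgt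
            · exact hu e' ⟨he', htg⟩
        · intro w hw
          rcases Set.mem_insert_iff.mp hw with rfl | hw
          · exact (G.reach_mono' (Set.subset_insert _ _) (hreach _ hesrc)).tail
              ⟨e, Set.mem_insert _ _, rfl, rfl⟩
          · exact G.reach_mono' (Set.subset_insert _ _) (hreach w hw)
      have hcard' : (insert (G.tgt e) W)ᶜ.ncard ≤ n := by
        have hsub : (insert (G.tgt e) W)ᶜ ⊂ Wᶜ := by
          constructor
          · intro y hy
            simp only [Set.mem_compl_iff, Set.mem_insert_iff, not_or] at hy ⊢
            exact hy.2
          · intro hsup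
            have := hsup hetgt
            simp at this
        have := Set.ncard_lt_ncard hsub (Set.toFinite _)
        omega
      obtain ⟨S, hS, hTS, hextra⟩ := ih _ _ hcard' hT'
      refine ⟨S, hS, fun e' he' => hTS (Set.mem_insert_of_mem _ he'), ?_⟩
      intro e' he' hne
      by_cases h' : e' = e
      · subst h'; exact hetgt
      · have h2 := hextra e' he' (by simp [Set.mem_insert_iff, h', hne])
        exact fun hmem => h2 (Set.mem_insert_of_mem _ hmem)

section
variable {G : MultiDigraph V E} {v : V} {W F : Set V} {T S : Set E}

lemma IsDirTree.par_aux (h : G.IsDirTree v W T) :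
    ∃ p : V → V, p v = v ∧ (∀ a b, G.step T a b → b ≠ v ∧ p b = a) ∧
      (∀ w ∈ W, ∃ k, p^[k] w = v) := by
  classical
  obtain ⟨hv, hedges, hnotv, huniq, hreach⟩ := h
  refine ⟨fun w => if hw : ∃ e ∈ T, G.tgt e = w then G.src hw.choose else v, ?_, ?_, ?_⟩
  · show (if hw : ∃ e ∈ T, G.tgt e = v then G.src hw.choose else v) = v
    exact dif_neg (by rintro ⟨e, he, htg⟩; exact hnotv e he htg)
  · rintro a b ⟨e, he, hsrc, htgt⟩
    have hbv : b ≠ v := fun hb => hnotv e he (htgt.trans hb)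
    have hw : ∃ e ∈ T, G.tgt e = b := ⟨e, he, htgt⟩
    have hbW : b ∈ W := htgt ▸ (hedges e he).2
    obtain ⟨e₁, he₁, hu⟩ := huniq b hbW hbv
    have h1 : hw.choose = e₁ := hu _ ⟨hw.choose_spec.1, hw.choose_spec.2⟩
    have h2 : e = e₁ := hu e ⟨he, htgt⟩
    refine ⟨hbv, ?_⟩
    show (if hw : ∃ e ∈ T, G.tgt e = b then G.src hw.choose else v) = a
    rw [dif_pos hw, h1, ← h2, hsrc]
  · -- reachability from v gives iterates hitting v
    have key : ∀ w, G.reach T v w → ∃ k,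
        (fun w => if hw : ∃ e ∈ T, G.tgt e = w then G.src hw.choose else v)^[k] w = v := by
      intro w hw
      induction hw with
      | refl => exact ⟨0, rfl⟩
      | @tail b c hab hstep ihw =>
        obtain ⟨k, hk⟩ := ihw
        obtain ⟨e, he, hsrc, htgt⟩ := hstep
        refine ⟨k + 1, ?_⟩
        rw [Function.iterate_succ_apply]
        have hw' : ∃ e ∈ T, G.tgt e = c := ⟨e, he, htgt⟩
        have hcv : c ≠ v := fun hb => hnotv e he (htgt.trans hb)
        have hcW : c ∈ W := htgt ▸ (hedges e he).2
        obtain ⟨e₁, he₁, hu⟩ := huniq c hcW hcv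
        have h1 : hw'.choose = e₁ := hu _ ⟨hw'.choose_spec.1, hw'.choose_spec.2⟩
        have h2 : e = e₁ := hu e ⟨he, htgt⟩
        have hb : (if hw : ∃ e ∈ T, G.tgt e = c then G.src hw.choose else v) = b := by
          rw [dif_pos hw', h1, ← h2, hsrc]
        rw [hb]
        exact hk
    exact fun w hw => key w (hreach w hw)

lemma IsDirTree.iter_aux (h : G.IsDirTree v W T) :
    ∃ p : V → V, (∀ j, p^[j] v = v) ∧ (∀ a b, G.step T a b → b ≠ v ∧ p b = a) ∧
      (∀ w ∈ W, ∃ k, p^[k] w = v) ∧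
      (∀ x y, G.reach T x y → ∃ k, p^[k] y = x) := by
  obtain ⟨p, hpv, hstep, hW⟩ := h.par_aux
  refine ⟨p, ?_, hstep, hW, ?_⟩
  · intro j
    induction j with
    | zero => rfl
    | succ j ihj => rw [Function.iterate_succ_apply, hpv]; exact ihj
  · intro x y hr
    induction hr with
    | refl => exact ⟨0, rfl⟩
    | @tail b c hab hs ihr =>
      obtain ⟨k, hk⟩ := ihr
      exact ⟨k + 1, by rw [Function.iterate_succ_apply, (hstep _ _ hs).2]; exact hk⟩

lemma IsDirTree.reach_antisymm (h : G.IsDirTree v W T) {x y : V} (hy : y ∈ W)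
    (hxy : G.reach T x y) (hyx : G.reach T y x) : x = y := by
  obtain ⟨p, hfix, hstep, hWv, hiter⟩ := h.iter_aux
  obtain ⟨k, hk⟩ := hiter x y hxy
  obtain ⟨m, hm⟩ := hiter y x hyx
  rcases Nat.eq_zero_or_pos (m + k) with h0 | hpos
  · have : k = 0 := by omega
    rw [this] at hk; exact hk.symm
  · obtain ⟨n, hn⟩ := hWv y hy
    have hK : p^[m + k] y = y := by
      rw [Function.iterate_add_apply, hk, hm]
    have hmult : ∀ j, p^[j * (m + k)] y = y := by
      intro j
      induction j with
      | zero => simp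
      | succ j ihj =>
        rw [Nat.succ_mul, Function.iterate_add_apply, hK, ihj]
    have hle : n ≤ n * (m + k) := Nat.le_mul_of_pos_right n hpos
    have hyv : y = v := by
      have h1 : p^[n * (m + k) - n + n] y = y := by
        rw [show n * (m + k) - n + n = n * (m + k) by omega]; exact hmult n
      rw [Function.iterate_add_apply, hn, hfix] at h1
      exact h1.symm
    subst hyv
    rw [hfix k] at hk
    exact hk.symm

lemma IsDirTree.no_self_step (h : G.IsDirTree v W T) {x : V} (hs : G.step T x x) :
    False := by
  obtain ⟨p, hfix, hstep, hWv, _⟩ := h.iter_aux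
  obtain ⟨hxv, hpx⟩ := hstep x x hs
  obtain ⟨e, he, _, htgt⟩ := hs
  have hxW : x ∈ W := htgt ▸ (h.2.1 e he).2
  obtain ⟨n, hn⟩ := hWv x hxW
  have : ∀ j, p^[j] x = x := by
    intro j
    induction j with
    | zero => rfl
    | succ j ihj => rw [Function.iterate_succ_apply, hpx]; exact ihj
  exact hxv ((this n).symm.trans hn)

lemma IsFSpanTree.reach_F [Finite V] (h : G.IsFSpanTree v F W T) :
    ∀ w ∈ W, ∃ f ∈ F, G.reach T w f := by
  obtain ⟨hT, hFW, hleaf⟩ := h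
  have main : ∀ n, ∀ w ∈ W, {y | G.reach T w y}.ncard ≤ n → ∃ f ∈ F, G.reach T w f := by
    intro n
    induction n with
    | zero =>
      intro w hw hcard
      exfalso
      have hmem : w ∈ {y | G.reach T w y} := Relation.ReflTransGen.refl
      have hpos : 0 < {y | G.reach T w y}.ncard :=
        (Set.ncard_pos (Set.toFinite _)).mpr ⟨w, hmem⟩
      omega
    | succ n ih =>
      intro w hw hcard
      by_cases hwF : w ∈ F
      · exact ⟨w, hwF, Relation.ReflTransGen.refl⟩
      · have hout : ∃ e ∈ T, G.src e = w := by
          by_contra hc; push_neg at hc; exact hwF (hleaf w hw hc)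
        obtain ⟨e, he, hsrc⟩ := hout
        have hyW : G.tgt e ∈ W := (hT.2.1 e he).2
        have hstep : G.step T w (G.tgt e) := ⟨e, he, hsrc, rfl⟩
        have hxy : w ≠ G.tgt e := by
          intro hwy
          exact hT.no_self_step (show G.step T w w from hwy ▸ hstep)
        have hsub : {z | G.reach T (G.tgt e) z} ⊆ {z | G.reach T w z} :=
          fun z hz => Relation.ReflTransGen.head hstep hz
        have hnot : w ∉ {z | G.reach T (G.tgt e) z} := by
          intro hzy
          exact hxy (hT.reach_antisymm hyW (Relation.ReflTransGen.single hstep) hzy)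
        have hlt : {z | G.reach T (G.tgt e) z}.ncard < {z | G.reach T w z}.ncard :=
          Set.ncard_lt_ncard ⟨hsub, fun hsup => hnot (hsup Relation.ReflTransGen.refl)⟩
            (Set.toFinite _)
        obtain ⟨f, hf, hrf⟩ := ih (G.tgt e) hyW (by omega)
        exact ⟨f, hf, Relation.ReflTransGen.head hstep hrf⟩
  exact fun w hw => main _ w hw le_rfl

lemma no_return (hT : G.IsDirTree v W T) (hS : G.IsSpanTree v S) (hTS : T ⊆ S)
    {x y : V} (hr : G.reach S x y) (hx : x ∉ W) : y ∉ W := by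
  have hS' : G.IsDirTree v Set.univ S := hS
  induction hr with
  | refl => exact hx
  | @tail b c hab hstep ihab =>
    intro hcW
    obtain ⟨e, he, hsrc, htgt⟩ := hstep
    have hcv : c ≠ v := fun hcv => hS'.2.2.1 e he (htgt.trans hcv)
    obtain ⟨e₀, ⟨he₀T, htg₀⟩, _⟩ := hT.2.2.2.1 c hcW hcv
    obtain ⟨e₁, _, hu⟩ := hS'.2.2.2.1 c (Set.mem_univ c) hcv
    have h1 : e = e₁ := hu e ⟨he, htgt⟩
    have h2 : e₀ = e₁ := hu e₀ ⟨hTS he₀T, htg₀⟩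
    have hsrc₀ : G.src e₀ ∈ W := (hT.2.1 e₀ he₀T).1
    rw [h2, ← h1, hsrc] at hsrc₀
    exact ihab hsrc₀

lemma recover [Finite V] (hF : G.IsFSpanTree v F W T) (hS : G.IsSpanTree v S)
    (hTS : T ⊆ S) (hextra : ∀ e ∈ S, e ∉ T → G.tgt e ∉ W) :
    T = {e ∈ S | ∃ f ∈ F, G.reach S (G.tgt e) f} := by
  ext e
  constructor
  · intro he
    refine ⟨hTS he, ?_⟩
    obtain ⟨f, hf, hr⟩ := hF.reach_F (G.tgt e) (hF.1.2.1 e he).2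
    exact ⟨f, hf, G.reach_mono' hTS hr⟩
  · rintro ⟨heS, f, hf, hr⟩
    by_contra heT
    exact no_return hF.1 hS hTS hr (hextra e heS heT) (hF.2.1 hf)

lemma reach_induce {T' : Set {e : E // G.src e ∈ F ∧ G.tgt e ∈ F}}
    {a b : F} (h : (G.induce F).reach T' a b) :
    G.reach (Subtype.val '' T') a.1 b.1 := by
  induction h with
  | refl => exact Relation.ReflTransGen.refl
  | @tail c d hab hstep ih =>
    obtain ⟨e', he', hs, ht⟩ := hstep
    exact ih.tail ⟨e'.1, ⟨e', he', rfl⟩, congrArg Subtype.val hs, congrArg Subtype.val ht⟩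

end

end MultiDigraph

/-- **Lemma on F-spanning trees.**  Let `G` be a finite `O`-connected digraph
and `F` a set of vertices.  If there are at least `n` distinct `F`-spanning
trees of `G` with origin `v`, then `G` has at least `n` directed spanning
subtrees with origin `v`.  In particular, if `v ∈ F` then the number of
directed spanning subtrees of `G` with origin `v` is at least the number of
directed spanning subtrees of the induced subgraph `G[F]` with origin `v`. -/
theorem le_treeCount_of_FSpanTrees {V E : Type} [Finite V] [Finite E]
    (G : MultiDigraph V E) (hconn : G.OConnected) (F : Set V) (v : V) :
    (∀ n : ℕ, n ≤ Set.ncard {T : Set E | ∃ W, G.IsFSpanTree v F W T} →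
      n ≤ G.treeCount v) ∧
    (∀ hv : v ∈ F, (G.induce F).treeCount ⟨v, hv⟩ ≤ G.treeCount v) := by
  classical
  have part1 : ∀ n : ℕ, n ≤ Set.ncard {T : Set E | ∃ W, G.IsFSpanTree v F W T} →
      n ≤ G.treeCount v := by
    intro n hn
    refine hn.trans ?_
    have hmap : ∀ T ∈ {T : Set E | ∃ W, G.IsFSpanTree v F W T}, ∃ S, G.IsSpanTree v S ∧
        T = {e ∈ S | ∃ f ∈ F, G.reach S (G.tgt e) f} := by
      rintro T ⟨W, hFW⟩
      obtain ⟨S, hS, hTS, hextra⟩ :=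
        G.exists_spanExtension hconn (Wᶜ.ncard) W T le_rfl hFW.1
      exact ⟨S, hS, MultiDigraph.recover hFW hS hTS hextra⟩
    choose! φ hφ using hmap
    show Set.ncard {T : Set E | ∃ W, G.IsFSpanTree v F W T} ≤
      Set.ncard {T : Set E | G.IsSpanTree v T}
    refine Set.ncard_le_ncard_of_injOn φ ?_ ?_ (Set.toFinite _)
    · intro T hT
      show G.IsSpanTree v (φ T)
      exact (hφ T hT).1
    · intro T1 h1 T2 h2 heq
      rw [(hφ T1 h1).2, (hφ T2 h2).2, heq]
  refine ⟨part1, ?_⟩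
  intro hv
  have hmem : ∀ T' : Set {e : E // G.src e ∈ F ∧ G.tgt e ∈ F},
      (G.induce F).IsSpanTree ⟨v, hv⟩ T' →
      G.IsFSpanTree v F F (Subtype.val '' T') := by
    intro T' hT'
    obtain ⟨_, _, hnotv', huniq', hreach'⟩ := hT'
    refine ⟨⟨hv, ?_, ?_, ?_, ?_⟩, subset_rfl, fun w hw _ => hw⟩
    · rintro e ⟨e', he', rfl⟩
      exact ⟨e'.2.1, e'.2.2⟩
    · rintro e ⟨e', he', rfl⟩ h
      exact hnotv' e' he' (Subtype.ext h)
    · intro w hwF hwv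
      obtain ⟨e', ⟨he', htg'⟩, hu'⟩ :=
        huniq' ⟨w, hwF⟩ (Set.mem_univ _) (fun hh => hwv (congrArg Subtype.val hh))
      refine ⟨e'.1, ⟨⟨e', he', rfl⟩, congrArg Subtype.val htg'⟩, ?_⟩
      rintro a ⟨⟨a', ha', rfl⟩, htga⟩
      exact congrArg Subtype.val (hu' a' ⟨ha', Subtype.ext htga⟩)
    · intro w hwF
      exact MultiDigraph.reach_induce (hreach' ⟨w, hwF⟩ (Set.mem_univ _))
  have h2 : (G.induce F).treeCount ⟨v, hv⟩ ≤
      Set.ncard {T : Set E | ∃ W, G.IsFSpanTree v F W T} := by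
    show Set.ncard {T' | (G.induce F).IsSpanTree ⟨v, hv⟩ T'} ≤ _
    refine Set.ncard_le_ncard_of_injOn (Subtype.val '' ·) ?_ ?_ (Set.toFinite _)
    · intro T' hT'
      show ∃ W, G.IsFSpanTree v F W (Subtype.val '' T')
      exact ⟨F, hmem T' hT'⟩
    · intro a _ b _ hab
      exact Set.image_injective.mpr Subtype.val_injective hab
  exact part1 _ h2
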